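/- Let ψ(i) denote the ν-almost sure limit of ψ^{(n)}(i). Then ν-almost surely, ψ is a (generalized) eigenfunction of H_β with eigenvalue 0: for every i ∈ V, 2β_i ψ(i) = Σ_{j∼i} W_{i,j} ψ(j), i.e. (H_β ψ)(i) = 0. -/

import Mathlib

open MeasureTheory

namespace VRJPStmt

variable {V : Type*} [DecidableEq V]

/-- Right-hand side of the Laplace transform of the random potential `β`, for a finite
window `U`: each non-oriented edge inside `U` is counted once (hence the factor `1/2` in
front of the sum over ordered pairs), and each boundary edge `{i,j}` with `i ∈ U`, `j ∉ U`
is counted once. -/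
noncomputable def laplaceRHS (G : SimpleGraph V) [DecidableRel G.Adj]
    [∀ v : V, Fintype (G.neighborSet v)] (W : V → V → ℝ) (U : Finset V) (lam : V → ℝ) : ℝ :=
  Real.exp
    (-(1/2) * ∑ i ∈ U, ∑ j ∈ U,
        (if G.Adj i j then W i j * (Real.sqrt ((1 + lam i) * (1 + lam j)) - 1) else 0)
      - ∑ i ∈ U, ∑ j ∈ G.neighborFinset i \ U, W i j * (Real.sqrt (1 + lam i) - 1))
    * ∏ i ∈ U, (1 + lam i) ^ (-(1/2) : ℝ)

/-- `ν` is a probability measure on `(0,∞)^V` whose canonical field `(β_i)` has the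
prescribed finite-dimensional Laplace transforms. -/
def IsBetaField (G : SimpleGraph V) [DecidableRel G.Adj]
    [∀ v : V, Fintype (G.neighborSet v)] (W : V → V → ℝ)
    (ν : Measure (V → ℝ)) : Prop :=
  IsProbabilityMeasure ν ∧ (∀ᵐ β ∂ν, ∀ i, 0 < β i) ∧
    ∀ U : Finset V, ∀ lam : V → ℝ, (∀ i, 0 ≤ lam i) →
      ∫ β, Real.exp (-(∑ i ∈ U, lam i * β i)) ∂ν = laplaceRHS G W U lam

/-- Weight `W_σ = Π W_{σ_k, σ_{k+1}}` of a path given as a list of vertices. -/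
noncomputable def wWeight (W : V → V → ℝ) (l : List V) : ℝ :=
  ((l.zip l.tail).map (fun p => W p.1 p.2)).prod

/-- `(2β)_σ = Π_{k=0}^m 2 β_{σ_k}`. -/
noncomputable def twoBetaFull (β : V → ℝ) (l : List V) : ℝ :=
  (l.map (fun k => 2 * β k)).prod

/-- `(2β)^−_σ = Π_{k=0}^{m−1} 2 β_{σ_k}` (all vertices but the last one). -/
noncomputable def twoBetaMinus (β : V → ℝ) (l : List V) : ℝ :=
  (l.dropLast.map (fun k => 2 * β k)).prod

/-- `l` is a path from `i` to `j` for the adjacency relation `A`. -/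
def IsWalkList (A : V → V → Prop) (i j : V) (l : List V) : Prop :=
  l ≠ [] ∧ l.head? = some i ∧ l.getLast? = some j ∧ l.Chain' A

/-- Paths from `i` to `j` staying in the set `S`. -/
def PathsIn (G : SimpleGraph V) (S : Set V) (i j : V) (l : List V) : Prop :=
  IsWalkList G.Adj i j l ∧ ∀ x ∈ l, x ∈ S

/-- Paths starting at `i`, staying in `S` except for the last vertex, which is outside `S`. -/
def ExitPaths (G : SimpleGraph V) (S : Set V) (i : V) (l : List V) : Prop :=
  l ≠ [] ∧ l.head? = some i ∧ l.Chain' G.Adj ∧ (∀ x ∈ l.dropLast, x ∈ S) ∧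
    (∀ x, l.getLast? = some x → x ∉ S)

/-- `Ĝ^{(n)}(i,j) = Σ_{σ ∈ 𝒫^{(n)}_{i,j}} W_σ/(2β)_σ` if `i,j ∈ V_n`, `0` otherwise. -/
noncomputable def GhatN (G : SimpleGraph V) (W : V → V → ℝ) (Vseq : ℕ → Finset V)
    (n : ℕ) (i j : V) (β : V → ℝ) : ℝ :=
  if i ∈ Vseq n ∧ j ∈ Vseq n then
    ∑' l : {l : List V // PathsIn G (↑(Vseq n)) i j l}, wWeight W ↑l / twoBetaFull β ↑l
  else 0

/-- `ψ^{(n)}(i) = Σ_{σ ∈ 𝒫̄^{(n)}_i} W_σ/(2β)^−_σ` if `i ∈ V_n`, `1` otherwise. -/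
noncomputable def psiN (G : SimpleGraph V) (W : V → V → ℝ) (Vseq : ℕ → Finset V)
    (n : ℕ) (i : V) (β : V → ℝ) : ℝ :=
  if i ∈ Vseq n then
    ∑' l : {l : List V // ExitPaths G (↑(Vseq n)) i l}, wWeight W ↑l / twoBetaMinus β ↑l
  else 1

/-- The σ-algebra `ℱ_n` generated by the coordinates `(β_i)_{i ∈ V_n}`. -/
def FiltN (Vseq : ℕ → Finset V) (n : ℕ) : MeasurableSpace (V → ℝ) :=
  MeasurableSpace.comap (fun β (i : {x : V // x ∈ Vseq n}) => β ↑i) inferInstance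

/-- `(V_n)` is an increasing exhausting sequence of finite connected subsets of the graph. -/
def IsExhaustion (G : SimpleGraph V) (Vseq : ℕ → Finset V) : Prop :=
  (∀ n, Vseq n ⊆ Vseq (n+1)) ∧ (∀ n, (G.induce (↑(Vseq n) : Set V)).Connected) ∧
    ∀ x : V, ∃ n, x ∈ Vseq n


section Aux

open Filter ENNReal

variable {V : Type*} [DecidableEq V] (G : SimpleGraph V) [DecidableRel G.Adj]
  (W : V → V → ℝ) (β : V → ℝ)

lemma wWeight_cons (a b : V) (t : List V) :
    wWeight W (a :: b :: t) = W a b * wWeight W (b :: t) := by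
  simp [wWeight]

lemma twoBetaMinus_cons (a : V) {l : List V} (h : l ≠ []) :
    twoBetaMinus β (a :: l) = (2 * β a) * twoBetaMinus β l := by
  obtain ⟨b, t, rfl⟩ := List.exists_cons_of_ne_nil h
  simp [twoBetaMinus]

lemma wWeight_nonneg (hW : ∀ a b, G.Adj a b → 0 < W a b) :
    ∀ {l : List V}, l.Chain' G.Adj → 0 ≤ wWeight W l := by
  intro l
  induction l with
  | nil => intro _; norm_num [wWeight]
  | cons a t ih =>
    intro h
    cases t with
    | nil => norm_num [wWeight]
    | cons b t' =>
      rw [List.Chain', List.isChain_cons_cons] at h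
      rw [wWeight_cons]
      exact mul_nonneg (hW _ _ h.1).le (ih h.2)

lemma twoBetaMinus_pos (hβ : ∀ v, 0 < β v) (l : List V) : 0 < twoBetaMinus β l := by
  unfold twoBetaMinus
  apply List.prod_pos
  intro x hx
  simp only [List.mem_map] at hx
  obtain ⟨k, -, rfl⟩ := hx
  have := hβ k
  positivity

lemma tsum_eq_toReal_tsum_ofReal {α : Type*} (f : α → ℝ) (hf : ∀ a, 0 ≤ f a) :
    ∑' a, f a = (∑' a, ENNReal.ofReal (f a)).toReal := by
  by_cases h : Summable f
  · rw [← ENNReal.ofReal_tsum_of_nonneg hf h, ENNReal.toReal_ofReal (tsum_nonneg hf)]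
  · rw [tsum_eq_zero_of_not_summable h]
    have htop : ∑' a, ENNReal.ofReal (f a) = ⊤ := by
      by_contra hne
      exact h ((ENNReal.summable_toReal hne).congr fun a => ENNReal.toReal_ofReal (hf a))
    rw [htop]; simp

open Classical in
/-- `ENNReal`-valued summand for exit-path sums. -/
noncomputable def eF (A : Finset V) (i : V) (l : List V) : ℝ≥0∞ :=
  if ExitPaths G (↑A) i l then ENNReal.ofReal (wWeight W l / twoBetaMinus β l) else 0

/-- `ENNReal`-valued total exit-path sum. -/
noncomputable def TT (A : Finset V) (i : V) : ℝ≥0∞ := ∑' l : List V, eF G W β A i l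

lemma psiN_eq_toReal (hW : ∀ a b, G.Adj a b → 0 < W a b) (hβ : ∀ v, 0 < β v)
    (Vseq : ℕ → Finset V) (n : ℕ) (i : V) (hi : i ∈ Vseq n) :
    psiN G W Vseq n i β = (TT G W β (Vseq n) i).toReal := by
  classical
  rw [psiN, if_pos hi]
  have h0 : ∀ l : List V,
      0 ≤ Set.indicator {l : List V | ExitPaths G (↑(Vseq n)) i l}
        (fun l => wWeight W l / twoBetaMinus β l) l := by
    intro l
    rw [Set.indicator_apply]
    split
    · next h =>
      exact div_nonneg (wWeight_nonneg G W hW h.2.2.1) (twoBetaMinus_pos β hβ l).le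
    · exact le_refl _
  have hst : (∑' l : {l : List V // ExitPaths G (↑(Vseq n)) i l},
        wWeight W ↑l / twoBetaMinus β ↑l)
      = ∑' l : List V, Set.indicator {l : List V | ExitPaths G (↑(Vseq n)) i l}
          (fun l => wWeight W l / twoBetaMinus β l) l :=
    tsum_subtype {l : List V | ExitPaths G (↑(Vseq n)) i l}
      (fun l => wWeight W l / twoBetaMinus β l)
  rw [hst, tsum_eq_toReal_tsum_ofReal _ h0]
  congr 1
  apply tsum_congr
  intro l
  by_cases hl : ExitPaths G (↑(Vseq n)) i l <;>
    simp [eF, hl, Set.indicator_apply, Set.mem_setOf_eq]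

lemma eF_eq_zero_of_head_ne (A : Finset V) (j : V) (l : List V)
    (h : l.head? ≠ some j) : eF G W β A j l = 0 := by
  rw [eF, if_neg]
  exact fun hEP => h hEP.2.1

open Classical in
/-- Auxiliary summand in the one-step decomposition. -/
noncomputable def gg (A : Finset V) (j : V) (l : List V) : ℝ≥0∞ :=
  if l.head? = some j then
    (if j ∈ A then eF G W β A j l else if l = [j] then 1 else 0)
  else 0

lemma eF_cons [∀ v : V, Fintype (G.neighborSet v)]
    (hW : ∀ a b, G.Adj a b → 0 < W a b) (hβ : ∀ v, 0 < β v)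
    (A : Finset V) (i : V) (hi : i ∈ A) (l : List V) :
    eF G W β A i (i :: l) = ∑ j ∈ G.neighborFinset i,
      ENNReal.ofReal (W i j / (2 * β i)) * gg G W β A j l := by
  classical
  cases l with
  | nil =>
    have hnot : ¬ ExitPaths G (↑A) i [i] := by
      rintro ⟨-, -, -, -, hlast⟩
      exact hlast i (by simp) (by simpa using hi)
    simp [eF, hnot, gg]
  | cons j' t =>
    by_cases hadj : G.Adj i j'
    · have hmem : j' ∈ G.neighborFinset i := by simpa using hadj
      rw [Finset.sum_eq_single_of_mem j' hmem (fun j hj hne => by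
        rw [gg, if_neg (by simpa using hne.symm), mul_zero])]
      rw [gg, if_pos (show (j' :: t).head? = some j' by simp)]
      by_cases hjA : j' ∈ A
      · rw [if_pos hjA]
        have hiff : ExitPaths G (↑A) i (i :: j' :: t) ↔ ExitPaths G (↑A) j' (j' :: t) := by
          constructor
          · rintro ⟨-, -, hch, hdrop, hlast⟩
            refine ⟨by simp, by simp, (List.isChain_cons_cons.mp hch).2, ?_, ?_⟩
            · intro x hx
              exact hdrop x (by rw [List.dropLast_cons₂]; exact List.mem_cons_of_mem _ hx)
            · intro x hx
              exact hlast x (by rw [List.getLast?_cons_cons]; exact hx)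
          · rintro ⟨-, -, hch, hdrop, hlast⟩
            refine ⟨by simp, by simp, List.isChain_cons_cons.mpr ⟨hadj, hch⟩, ?_, ?_⟩
            · intro x hx
              rw [List.dropLast_cons₂] at hx
              rcases List.mem_cons.mp hx with rfl | hx
              · simpa using hi
              · exact hdrop x hx
            · intro x hx
              exact hlast x (by rwa [List.getLast?_cons_cons] at hx)
        by_cases hp : ExitPaths G (↑A) j' (j' :: t)
        · rw [eF, if_pos (hiff.mpr hp), eF, if_pos hp,
            wWeight_cons, twoBetaMinus_cons β i (List.cons_ne_nil _ _)]
          rw [← ENNReal.ofReal_mul (by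
            have h1 := hW i j' hadj
            have h2 := hβ i
            positivity)]
          congr 1
          rw [div_mul_div_comm]
        · rw [eF, if_neg (fun h => hp (hiff.mp h)), eF, if_neg hp, mul_zero]
      · rw [if_neg hjA]
        cases t with
        | nil =>
          rw [if_pos rfl, mul_one]
          have hp : ExitPaths G (↑A) i [i, j'] := by
            refine ⟨by simp, by simp, ?_, ?_, ?_⟩
            · simp [hadj, List.Chain']
            · intro x hx
              simp only [List.dropLast, List.mem_singleton] at hx
              subst hx
              simpa using hi
            · intro x hx
              simp only [List.getLast?_cons_cons, List.getLast?_singleton,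
                Option.some.injEq] at hx
              subst hx
              simpa using hjA
          rw [eF, if_pos hp]
          congr 1
          have h1 : wWeight W [i, j'] = W i j' := by simp [wWeight]
          have h2 : twoBetaMinus β [i, j'] = 2 * β i := by simp [twoBetaMinus]
          rw [h1, h2]
        | cons x t' =>
          rw [if_neg (by simp), mul_zero, eF, if_neg]
          rintro ⟨-, -, -, hdrop, -⟩
          refine hjA ?_
          have : j' ∈ (↑A : Set V) := hdrop j' (by
            rw [List.dropLast_cons₂]
            exact List.mem_cons_of_mem _ (by
              rw [List.dropLast_cons₂]
              exact List.mem_cons_self))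
          simpa using this
    · have h0 : eF G W β A i (i :: j' :: t) = 0 := by
        rw [eF, if_neg]
        rintro ⟨-, -, hch, -, -⟩
        exact hadj (List.isChain_cons_cons.mp hch).1
      rw [h0]
      symm
      apply Finset.sum_eq_zero
      intro j hj
      by_cases hh : (j' :: t).head? = some j
      · exfalso
        simp only [List.head?_cons, Option.some.injEq] at hh
        subst hh
        exact hadj (by simpa using hj)
      · rw [gg, if_neg hh, mul_zero]

lemma tsum_gg (A : Finset V) (j : V) :
    ∑' l : List V, gg G W β A j l = if j ∈ A then TT G W β A j else 1 := by
  classical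
  by_cases hjA : j ∈ A
  · rw [if_pos hjA, TT]
    apply tsum_congr
    intro l
    rw [gg]
    by_cases hh : l.head? = some j
    · rw [if_pos hh, if_pos hjA]
    · rw [if_neg hh, eF_eq_zero_of_head_ne G W β A j l hh]
  · rw [if_neg hjA]
    have hgg : ∀ l : List V, gg G W β A j l = if l = [j] then 1 else 0 := by
      intro l
      by_cases hl : l = [j]
      · subst hl
        simp [gg, hjA]
      · by_cases hh : l.head? = some j
        · simp [gg, hjA, hl, hh]
        · simp [gg, hjA, hl, hh]
    rw [tsum_congr hgg]
    exact tsum_ite_eq [j] (fun _ => (1 : ℝ≥0∞))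

lemma TT_rec [∀ v : V, Fintype (G.neighborSet v)]
    (hW : ∀ a b, G.Adj a b → 0 < W a b) (hβ : ∀ v, 0 < β v)
    (A : Finset V) (i : V) (hi : i ∈ A) :
    TT G W β A i = ∑ j ∈ G.neighborFinset i,
      ENNReal.ofReal (W i j / (2 * β i)) * (if j ∈ A then TT G W β A j else 1) := by
  classical
  have hinj : Function.Injective (List.cons i) := fun a b h => by injection h
  have hsupp : Function.support (eF G W β A i) ⊆ Set.range (List.cons i) := by
    intro l hl
    rw [Function.mem_support] at hl
    by_cases hEP : ExitPaths G (↑A) i l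
    · obtain ⟨hne, hhead, -⟩ := hEP
      obtain ⟨a, t, rfl⟩ := List.exists_cons_of_ne_nil hne
      simp only [List.head?_cons, Option.some.injEq] at hhead
      exact ⟨t, by rw [hhead]⟩
    · exact absurd (by rw [eF, if_neg hEP]) hl
  have h1 : TT G W β A i = ∑' l : List V, eF G W β A i (i :: l) :=
    (hinj.tsum_eq hsupp).symm
  rw [h1, tsum_congr (eF_cons G W β hW hβ A i hi),
    Summable.tsum_finsetSum (fun j _ => ENNReal.summable)]
  apply Finset.sum_congr rfl
  intro j _
  rw [ENNReal.tsum_mul_left, tsum_gg]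

end Aux

/-- Let `ψ(i)` be the `ν`-a.s. limit of `ψ^{(n)}(i)`. Then `ν`-a.s., `ψ`
is a generalized eigenfunction of `H_β` with eigenvalue `0`: for every `i ∈ V`,
`2 β_i ψ(i) = Σ_{j∼i} W_{i,j} ψ(j)`, i.e. `(H_β ψ)(i) = 0`. -/
theorem stmt18 {V : Type*} [DecidableEq V] [Infinite V] (G : SimpleGraph V)
    [DecidableRel G.Adj] [∀ v : V, Fintype (G.neighborSet v)] (hconn : G.Connected)
    (W : V → V → ℝ) (hWsymm : ∀ i j, W i j = W j i) (hWpos : ∀ i j, G.Adj i j → 0 < W i j)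
    (ν : MeasureTheory.Measure (V → ℝ)) (hν : IsBetaField G W ν)
    (Vseq : ℕ → Finset V) (hVseq : IsExhaustion G Vseq)
    (ψ : V → (V → ℝ) → ℝ)
    (hψ : ∀ i, ∀ᵐ β ∂ν,
      Filter.Tendsto (fun n => psiN G W Vseq n i β) Filter.atTop (nhds (ψ i β))) :
    ∀ᵐ β ∂ν, ∀ i : V,
      2 * β i * ψ i β = ∑ j ∈ G.neighborFinset i, W i j * ψ j β := by
  classical
  have hcount : Countable V := by
    rw [← Set.countable_univ_iff]
    have huniv : (Set.univ : Set V) = ⋃ n, ↑(Vseq n) := by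
      ext x
      simpa using hVseq.2.2 x
    rw [huniv]
    exact Set.countable_iUnion fun n => (Vseq n).countable_toSet
  have hmono : Monotone Vseq :=
    monotone_nat_of_le_succ fun n => Finset.le_iff_subset.mpr (hVseq.1 n)
  filter_upwards [hν.2.1, MeasureTheory.ae_all_iff.mpr hψ] with β hβ hlim
  intro i
  choose f hf using hVseq.2.2
  set nb := G.neighborFinset i with hnb
  set N := (insert i nb).sup f with hN
  have hmemN : ∀ n, N ≤ n → i ∈ Vseq n ∧ ∀ j ∈ nb, j ∈ Vseq n := by
    intro n hn
    have key : ∀ x ∈ insert i nb, x ∈ Vseq n := by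
      intro x hx
      have hfx : f x ≤ n := le_trans (Finset.le_sup hx) hn
      exact Finset.le_iff_subset.mp (hmono hfx) (hf x)
    exact ⟨key i (Finset.mem_insert_self _ _), fun j hj => key j (Finset.mem_insert_of_mem hj)⟩
  by_cases hfr : ∃ᶠ n in Filter.atTop, TT G W β (Vseq n) i ≠ ⊤
  · -- along a subsequence all the exit-path sums are finite, and the recursion holds
    have hfr2 : ∃ᶠ n in Filter.atTop, N ≤ n ∧ TT G W β (Vseq n) i ≠ ⊤ :=
      (hfr.and_eventually (Filter.eventually_ge_atTop N)).mono fun n h => ⟨h.2, h.1⟩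
    obtain ⟨φ, hφm, hφ⟩ := Filter.extraction_of_frequently_atTop hfr2
    have key : ∀ k, 2 * β i * psiN G W Vseq (φ k) i β
        = ∑ j ∈ nb, W i j * psiN G W Vseq (φ k) j β := by
      intro k
      obtain ⟨hNk, hfin⟩ := hφ k
      obtain ⟨hiV, hjV⟩ := hmemN _ hNk
      have hrec : TT G W β (Vseq (φ k)) i
          = ∑ j ∈ nb, ENNReal.ofReal (W i j / (2 * β i)) * TT G W β (Vseq (φ k)) j := by
        rw [TT_rec G W β hWpos hβ _ i hiV]
        exact Finset.sum_congr rfl fun j hj => by rw [if_pos (hjV j hj)]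
      have hterm : ∀ j ∈ nb,
          ENNReal.ofReal (W i j / (2 * β i)) * TT G W β (Vseq (φ k)) j ≠ ⊤ := by
        intro j hj
        exact (ENNReal.sum_lt_top.mp (lt_top_iff_ne_top.mpr (hrec ▸ hfin)) j hj).ne
      have hTj : ∀ j ∈ nb, TT G W β (Vseq (φ k)) j ≠ ⊤ := by
        intro j hj htop
        apply hterm j hj
        rw [htop, ENNReal.mul_top]
        refine (ENNReal.ofReal_pos.mpr ?_).ne'
        have h1 := hWpos i j ((SimpleGraph.mem_neighborFinset G i j).mp hj)
        have h2 := hβ i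
        positivity
      have hcoe := congrArg ENNReal.toReal hrec
      rw [ENNReal.toReal_sum hterm] at hcoe
      rw [psiN_eq_toReal G W β hWpos hβ Vseq _ i hiV, hcoe, Finset.mul_sum]
      apply Finset.sum_congr rfl
      intro j hj
      have h2b : (2 : ℝ) * β i ≠ 0 := by have := hβ i; positivity
      rw [psiN_eq_toReal G W β hWpos hβ Vseq _ j (hjV j hj),
        ENNReal.toReal_mul, ENNReal.toReal_ofReal (by
          have h1 := hWpos i j ((SimpleGraph.mem_neighborFinset G i j).mp hj)
          have h2 := hβ i
          positivity), ← mul_assoc]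
      congr 1
      rw [mul_comm, div_mul_cancel₀ _ h2b]
    have hL : Filter.Tendsto (fun k => 2 * β i * psiN G W Vseq (φ k) i β)
        Filter.atTop (nhds (2 * β i * ψ i β)) :=
      ((hlim i).const_mul (2 * β i)).comp hφm.tendsto_atTop
    have hR : Filter.Tendsto (fun k => ∑ j ∈ nb, W i j * psiN G W Vseq (φ k) j β)
        Filter.atTop (nhds (∑ j ∈ nb, W i j * ψ j β)) :=
      (tendsto_finset_sum nb fun j _ => (hlim j).const_mul (W i j)).comp hφm.tendsto_atTop
    exact tendsto_nhds_unique (hL.congr key) hR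
  · -- eventually everything explodes, so ψ vanishes at i and all its neighbours
    have hev : ∀ᶠ n in Filter.atTop, N ≤ n ∧ TT G W β (Vseq n) i = ⊤ := by
      have h1 := Filter.not_frequently.mp hfr
      simp only [not_not] at h1
      exact (Filter.eventually_ge_atTop N).and h1
    have hTj : ∀ᶠ n in Filter.atTop, ∀ j ∈ nb, TT G W β (Vseq n) j = ⊤ := by
      filter_upwards [hev] with n hn j hj
      obtain ⟨hNn, htop⟩ := hn
      obtain ⟨hiV, hjV⟩ := hmemN n hNn
      have hadj : G.Adj i j := (SimpleGraph.mem_neighborFinset G i j).mp hj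
      have himem : i ∈ G.neighborFinset j := (SimpleGraph.mem_neighborFinset G j i).mpr hadj.symm
      rw [TT_rec G W β hWpos hβ (Vseq n) j (hjV j hj)]
      refine top_le_iff.mp ?_
      calc (⊤ : ENNReal)
          = ENNReal.ofReal (W j i / (2 * β j))
              * (if i ∈ Vseq n then TT G W β (Vseq n) i else 1) := by
            rw [if_pos hiV, htop, ENNReal.mul_top]
            refine (ENNReal.ofReal_pos.mpr ?_).ne'
            have h1 := hWpos j i hadj.symm
            have h2 := hβ j
            positivity
        _ ≤ ∑ k ∈ G.neighborFinset j, ENNReal.ofReal (W j k / (2 * β j))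
              * (if k ∈ Vseq n then TT G W β (Vseq n) k else 1) :=
          Finset.single_le_sum (f := fun k => ENNReal.ofReal (W j k / (2 * β j))
            * (if k ∈ Vseq n then TT G W β (Vseq n) k else 1)) (fun k _ => zero_le) himem
    have hψi : ψ i β = 0 := by
      refine tendsto_nhds_unique (hlim i) ?_
      refine Filter.Tendsto.congr' ?_ tendsto_const_nhds
      filter_upwards [hev] with n hn
      rw [psiN_eq_toReal G W β hWpos hβ Vseq n i (hmemN n hn.1).1, hn.2, ENNReal.toReal_top]
    have hψj : ∀ j ∈ nb, ψ j β = 0 := by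
      intro j hj
      refine tendsto_nhds_unique (hlim j) ?_
      refine Filter.Tendsto.congr' ?_ tendsto_const_nhds
      filter_upwards [hev, hTj] with n hn hTj'
      rw [psiN_eq_toReal G W β hWpos hβ Vseq n j ((hmemN n hn.1).2 j hj), hTj' j hj,
        ENNReal.toReal_top]
    rw [hψi, mul_zero]
    exact (Finset.sum_eq_zero fun j hj => by rw [hψj j hj, mul_zero]).symm

end VRJPStmt
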